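/- An integral domain D is t-sharp if and only if (a) D is pre-Krull (i.e. I_v is t-invertible for each nonzero ideal I of D), and (b) for all nonzero ideals I, A, B of D with I_v = D and I ⊇ AB, there exist nonzero ideals H and J of D such that I_t = (HJ)_t, H_t ⊇ A and J_t ⊇ B. -/

import Mathlib

open scoped nonZeroDivisors

section StarSharpDefs

variable {D K : Type*} [CommRing D] [IsDomain D] [Field K] [Algebra D K] [IsFractionRing D K]

/-- `D` is sharp with respect to the operation `star` ("`*`-sharp"): whenever
`I ⊇ A·B` for nonzero ideals `I, A, B` of `D`, there exist nonzero ideals `H, J`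
with `I* = (HJ)*`, `H* ⊇ A` and `J* ⊇ B`. -/
def IsSharpOp (star : FractionalIdeal D⁰ K → FractionalIdeal D⁰ K) : Prop :=
  ∀ I A B : Ideal D, I ≠ 0 → A ≠ 0 → B ≠ 0 → A * B ≤ I →
    ∃ H J : Ideal D, H ≠ 0 ∧ J ≠ 0 ∧
      star (I : FractionalIdeal D⁰ K) =
        star ((H : FractionalIdeal D⁰ K) * (J : FractionalIdeal D⁰ K)) ∧
      (A : FractionalIdeal D⁰ K) ≤ star (H : FractionalIdeal D⁰ K) ∧
      (B : FractionalIdeal D⁰ K) ≤ star (J : FractionalIdeal D⁰ K)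

lemma inv_ne_zero' {I : FractionalIdeal D⁰ K} (hI : I ≠ 0) : I⁻¹ ≠ 0 := by
  obtain ⟨d, hd, hdI⟩ := I.isFractional
  have hmem : algebraMap D K d ∈ I⁻¹ := by
    rw [FractionalIdeal.mem_inv_iff hI]
    intro y hy
    obtain ⟨c, hc⟩ := hdI y hy
    refine ⟨c, trivial, ?_⟩
    simpa [Algebra.smul_def] using hc
  intro h0
  rw [h0] at hmem
  have : algebraMap D K d ≠ 0 :=
    IsFractionRing.to_map_ne_zero_of_mem_nonZeroDivisors hd
  exact this (by simpa using hmem)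

/-- The `v`-operation `I ↦ I_v = (I⁻¹)⁻¹`. -/
noncomputable def vOp (I : FractionalIdeal D⁰ K) : FractionalIdeal D⁰ K := (I⁻¹)⁻¹

lemma vOp_mono {I J : FractionalIdeal D⁰ K} (h : I ≤ J) : vOp I ≤ vOp J := by
  rcases eq_or_ne I 0 with rfl | hI
  · show ((0 : FractionalIdeal D⁰ K)⁻¹)⁻¹ ≤ vOp J
    rw [FractionalIdeal.inv_zero', FractionalIdeal.inv_zero']
    exact FractionalIdeal.zero_le _
  have hJ : J ≠ 0 := fun hJ0 => hI (le_antisymm (hJ0 ▸ h) (FractionalIdeal.zero_le I))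
  exact FractionalIdeal.inv_anti_mono (inv_ne_zero' hJ) (inv_ne_zero' hI)
    (FractionalIdeal.inv_anti_mono hI hJ h)

/-- The `t`-operation: `I_t` is the union of `H_v` over the finitely generated
subideals `H` of `I`. -/
noncomputable def tOp (I : FractionalIdeal D⁰ K) : FractionalIdeal D⁰ K :=
  ⟨⨆ J : {J : FractionalIdeal D⁰ K // (J : Submodule D K).FG ∧ J ≤ I},
      ((vOp (J : FractionalIdeal D⁰ K) : FractionalIdeal D⁰ K) : Submodule D K),
    FractionalIdeal.isFractional_of_le (J := vOp I)
      (iSup_le fun J => FractionalIdeal.coe_le_coe.2 (vOp_mono J.2.2))⟩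

end StarSharpDefs

section Aux2
variable {D K : Type*} [CommRing D] [IsDomain D] [Field K] [Algebra D K] [IsFractionRing D K]

lemma frac_mul_ne_zero {X Y : FractionalIdeal D⁰ K} (hX : X ≠ 0) (hY : Y ≠ 0) : X * Y ≠ 0 := by
  obtain ⟨x, hx, hx0⟩ : ∃ x ∈ X, x ≠ (0:K) := by
    by_contra h; push_neg at h
    exact hX (le_antisymm (fun z hz => by simpa using h z hz) (FractionalIdeal.zero_le X))
  obtain ⟨y, hy, hy0⟩ : ∃ y ∈ Y, y ≠ (0:K) := by
    by_contra h; push_neg at h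
    exact hY (le_antisymm (fun z hz => by simpa using h z hz) (FractionalIdeal.zero_le Y))
  intro h0
  have : x * y ∈ (X * Y : FractionalIdeal D⁰ K) := FractionalIdeal.mul_mem_mul hx hy
  rw [h0] at this
  exact (mul_ne_zero hx0 hy0) (by simpa using this)

lemma le_vOpX (I : FractionalIdeal D⁰ K) : I ≤ vOp I := by
  rcases eq_or_ne I 0 with rfl | hI
  · show (0:FractionalIdeal D⁰ K) ≤ ((0 : FractionalIdeal D⁰ K)⁻¹)⁻¹
    exact FractionalIdeal.zero_le _
  intro x hx
  have hIinv : (I⁻¹ : FractionalIdeal D⁰ K) ≠ 0 := inv_ne_zero' hI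
  show x ∈ (I⁻¹)⁻¹
  rw [FractionalIdeal.mem_inv_iff hIinv]
  intro y hy
  rw [FractionalIdeal.mem_inv_iff hI] at hy
  rw [mul_comm]; exact hy x hx

lemma inv_vOp (I : FractionalIdeal D⁰ K) : (vOp I)⁻¹ = I⁻¹ := by
  rcases eq_or_ne I 0 with rfl | hI
  · show (((0:FractionalIdeal D⁰ K)⁻¹)⁻¹)⁻¹ = _
    simp only [FractionalIdeal.inv_zero']
  · refine le_antisymm ?_ (le_vOpX I⁻¹)
    exact FractionalIdeal.inv_anti_mono hI
      (fun h => hI (le_antisymm (h ▸ le_vOpX I) (FractionalIdeal.zero_le I))) (le_vOpX I)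

lemma vOp_vOp (I : FractionalIdeal D⁰ K) : vOp (vOp I) = vOp I := by
  show ((vOp I)⁻¹)⁻¹ = vOp I
  rw [inv_vOp]; rfl

lemma vOp_ne_zero {I : FractionalIdeal D⁰ K} (hI : I ≠ 0) : vOp I ≠ 0 :=
  fun h => hI (le_antisymm (h ▸ le_vOpX I) (FractionalIdeal.zero_le I))

lemma vOp_one : vOp (1 : FractionalIdeal D⁰ K) = 1 := by
  show ((1:FractionalIdeal D⁰ K)⁻¹)⁻¹ = 1
  rw [show ((1:FractionalIdeal D⁰ K)⁻¹) = 1 by rw [FractionalIdeal.inv_eq, FractionalIdeal.div_one],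
    FractionalIdeal.inv_eq, FractionalIdeal.div_one]

lemma vOp_zero : vOp (0 : FractionalIdeal D⁰ K) = 0 := by
  show ((0:FractionalIdeal D⁰ K)⁻¹)⁻¹ = 0
  simp only [FractionalIdeal.inv_zero']

lemma mul_inv_le_one' {I : FractionalIdeal D⁰ K} (hI : I ≠ 0) : I * I⁻¹ ≤ 1 := by
  rw [FractionalIdeal.mul_le]
  intro i hi j hj
  rw [FractionalIdeal.mem_inv_iff hI] at hj
  rw [mul_comm]; exact hj i hi

lemma mem_inv_smul_aux {z w : K} {c : D} (h : z * w ∈ (1 : FractionalIdeal D⁰ K)) :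
    w * (c • z) ∈ (1 : FractionalIdeal D⁰ K) := by
  rw [FractionalIdeal.mem_one_iff] at h ⊢
  obtain ⟨x', hx'⟩ := h
  exact ⟨c * x', by rw [map_mul, hx', Algebra.smul_def]; ring⟩

lemma inv_mul_vOp_eq (X Y : FractionalIdeal D⁰ K) : (X * vOp Y)⁻¹ = (X * Y)⁻¹ := by
  rcases eq_or_ne X 0 with rfl | hX
  · rw [zero_mul, zero_mul]
  rcases eq_or_ne Y 0 with rfl | hY
  · rw [vOp_zero]
  have h1 : (X * Y : FractionalIdeal D⁰ K) ≠ 0 := frac_mul_ne_zero hX hY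
  have h2 : (X * vOp Y : FractionalIdeal D⁰ K) ≠ 0 := frac_mul_ne_zero hX (vOp_ne_zero hY)
  refine le_antisymm
    (FractionalIdeal.inv_anti_mono h1 h2 (mul_le_mul_right (le_vOpX Y) X)) ?_
  intro z hz0'
  have hz : z ∈ (X * Y)⁻¹ := hz0'
  rw [FractionalIdeal.mem_inv_iff h1] at hz
  show z ∈ (X * vOp Y)⁻¹
  rw [FractionalIdeal.mem_inv_iff h2]
  rcases eq_or_ne z 0 with rfl | hz0
  · intro y _
    rw [zero_mul, FractionalIdeal.mem_one_iff]
    exact ⟨0, map_zero _⟩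
  have key : ∀ x ∈ X, ∀ y ∈ vOp Y, z * (x * y) ∈ (1 : FractionalIdeal D⁰ K) := by
    intro x hx y hy
    have hzx : z * x ∈ (Y⁻¹ : FractionalIdeal D⁰ K) := by
      rw [FractionalIdeal.mem_inv_iff hY]
      intro u hu
      have := hz (x * u) (FractionalIdeal.mul_mem_mul hx hu)
      rwa [← mul_assoc] at this
    have hy' : y ∈ ((Y⁻¹ : FractionalIdeal D⁰ K))⁻¹ := hy
    rw [FractionalIdeal.mem_inv_iff (inv_ne_zero' hY)] at hy'
    have := hy' (z * x) hzx
    rwa [show z * (x * y) = y * (z * x) by ring]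
  have hz0' : FractionalIdeal.spanSingleton D⁰ z ≠ 0 :=
    FractionalIdeal.spanSingleton_ne_zero_iff.2 hz0
  have hle : X * vOp Y ≤ (FractionalIdeal.spanSingleton D⁰ z)⁻¹ := by
    rw [FractionalIdeal.mul_le]
    intro x hx y hy
    rw [FractionalIdeal.mem_inv_iff hz0']
    intro u hu
    obtain ⟨c, rfl⟩ := (FractionalIdeal.mem_spanSingleton (S := D⁰)).mp hu
    exact mem_inv_smul_aux (key x hx y hy)
  intro w hw
  have hw' : w ∈ (FractionalIdeal.spanSingleton D⁰ z)⁻¹ := hle hw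
  have := (FractionalIdeal.mem_inv_iff hz0').mp hw' z
    (FractionalIdeal.mem_spanSingleton_self D⁰ z)
  rwa [mul_comm]

lemma vOp_mul_vOp (X Y : FractionalIdeal D⁰ K) : vOp (X * vOp Y) = vOp (X * Y) := by
  show ((X * vOp Y)⁻¹)⁻¹ = ((X * Y)⁻¹)⁻¹
  rw [inv_mul_vOp_eq]

lemma le_inv_iff_mul_le' {X Y : FractionalIdeal D⁰ K} (hX : X ≠ 0) : Y ≤ X⁻¹ ↔ Y * X ≤ 1 := by
  rw [FractionalIdeal.inv_eq]
  exact FractionalIdeal.le_div_iff_mul_le hX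

lemma inv_span_mul {x : K} (hx : x ≠ 0) (J : FractionalIdeal D⁰ K) :
    (FractionalIdeal.spanSingleton D⁰ x * J)⁻¹ =
      FractionalIdeal.spanSingleton D⁰ x⁻¹ * J⁻¹ := by
  rcases eq_or_ne J 0 with rfl | hJ
  · rw [mul_zero]
    simp only [FractionalIdeal.inv_zero', mul_zero]
  have hs : FractionalIdeal.spanSingleton D⁰ x ≠ 0 :=
    FractionalIdeal.spanSingleton_ne_zero_iff.2 hx
  have hs' : FractionalIdeal.spanSingleton D⁰ x * J ≠ 0 := frac_mul_ne_zero hs hJ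
  have hcancel : FractionalIdeal.spanSingleton D⁰ x⁻¹ * FractionalIdeal.spanSingleton D⁰ x
      = 1 := by
    rw [FractionalIdeal.spanSingleton_mul_spanSingleton, inv_mul_cancel₀ hx,
      FractionalIdeal.spanSingleton_one]
  apply le_antisymm
  · intro z hz'
    have hz : z ∈ (FractionalIdeal.spanSingleton D⁰ x * J)⁻¹ := hz'
    rw [FractionalIdeal.mem_inv_iff hs'] at hz
    have hxz : x * z ∈ (J⁻¹ : FractionalIdeal D⁰ K) := by
      rw [FractionalIdeal.mem_inv_iff hJ]
      intro y hy
      have := hz (x * y)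
        (FractionalIdeal.mul_mem_mul (FractionalIdeal.mem_spanSingleton_self D⁰ x) hy)
      rwa [show x * z * y = z * (x * y) by ring]
    show z ∈ FractionalIdeal.spanSingleton D⁰ x⁻¹ * J⁻¹
    have := FractionalIdeal.mul_mem_mul
      (FractionalIdeal.mem_spanSingleton_self D⁰ x⁻¹) hxz
    rwa [show x⁻¹ * (x * z) = z by field_simp] at this
  · rw [le_inv_iff_mul_le' hs']
    rw [show FractionalIdeal.spanSingleton D⁰ x⁻¹ * J⁻¹ *
        (FractionalIdeal.spanSingleton D⁰ x * J)
        = (FractionalIdeal.spanSingleton D⁰ x⁻¹ * FractionalIdeal.spanSingleton D⁰ x)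
          * (J⁻¹ * J) by ring]
    rw [hcancel, one_mul, mul_comm]
    exact mul_inv_le_one' hJ

lemma vOp_span_mul {x : K} (hx : x ≠ 0) (J : FractionalIdeal D⁰ K) :
    vOp (FractionalIdeal.spanSingleton D⁰ x * J) =
      FractionalIdeal.spanSingleton D⁰ x * vOp J := by
  show (_⁻¹)⁻¹ = _
  rw [inv_span_mul hx, inv_span_mul (inv_ne_zero hx), inv_inv]
  rfl

lemma vOp_spanSingleton (x : K) :
    vOp (FractionalIdeal.spanSingleton D⁰ x) = FractionalIdeal.spanSingleton D⁰ x := by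
  show (_⁻¹)⁻¹ = _
  rw [FractionalIdeal.spanSingleton_inv, FractionalIdeal.spanSingleton_inv, inv_inv]

lemma mem_tOp {I : FractionalIdeal D⁰ K} {x : K} :
    x ∈ tOp I ↔ ∃ J : FractionalIdeal D⁰ K, (J : Submodule D K).FG ∧ J ≤ I ∧ x ∈ vOp J := by
  have hdir : Directed (· ≤ ·)
      (fun J : {J : FractionalIdeal D⁰ K // (J : Submodule D K).FG ∧ J ≤ I} =>
        ((vOp (J : FractionalIdeal D⁰ K) : FractionalIdeal D⁰ K) : Submodule D K)) := by
    rintro ⟨J₁, h₁, l₁⟩ ⟨J₂, h₂, l₂⟩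
    refine ⟨⟨J₁ ⊔ J₂, ?_, sup_le l₁ l₂⟩, ?_, ?_⟩
    · rw [FractionalIdeal.coe_sup]; exact h₁.sup h₂
    · exact FractionalIdeal.coe_le_coe.2 (vOp_mono le_sup_left)
    · exact FractionalIdeal.coe_le_coe.2 (vOp_mono le_sup_right)
  have hne : Nonempty {J : FractionalIdeal D⁰ K // (J : Submodule D K).FG ∧ J ≤ I} :=
    ⟨⟨0, by rw [FractionalIdeal.coe_zero]; exact Submodule.fg_bot, FractionalIdeal.zero_le I⟩⟩
  constructor
  · intro hx
    have hx' : x ∈ (⨆ J : {J : FractionalIdeal D⁰ K // (J : Submodule D K).FG ∧ J ≤ I},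
        ((vOp (J : FractionalIdeal D⁰ K) : FractionalIdeal D⁰ K) : Submodule D K)) := hx
    obtain ⟨J, hJ⟩ := (Submodule.mem_iSup_of_directed _ hdir).mp hx'
    exact ⟨J.1, J.2.1, J.2.2, hJ⟩
  · rintro ⟨J, hfg, hle, hv⟩
    show x ∈ (⨆ J : {J : FractionalIdeal D⁰ K // (J : Submodule D K).FG ∧ J ≤ I},
        ((vOp (J : FractionalIdeal D⁰ K) : FractionalIdeal D⁰ K) : Submodule D K))
    exact (Submodule.mem_iSup_of_directed _ hdir).mpr ⟨⟨J, hfg, hle⟩, hv⟩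

lemma tOp_le_vOp (I : FractionalIdeal D⁰ K) : tOp I ≤ vOp I := by
  intro x hx
  have hx' : x ∈ tOp I := hx
  obtain ⟨J, _, hle, hv⟩ := mem_tOp.mp hx'
  exact vOp_mono hle hv

lemma le_tOp (I : FractionalIdeal D⁰ K) : I ≤ tOp I := by
  intro x hx
  have hx' : x ∈ I := hx
  show x ∈ tOp I
  refine mem_tOp.mpr ⟨FractionalIdeal.spanSingleton D⁰ x, ?_, ?_, ?_⟩
  · rw [FractionalIdeal.coe_spanSingleton]; exact Submodule.fg_span_singleton x
  · exact FractionalIdeal.spanSingleton_le_iff_mem.mpr hx'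
  · exact le_vOpX _ (FractionalIdeal.mem_spanSingleton_self D⁰ x)

lemma tOp_mono {I I' : FractionalIdeal D⁰ K} (h : I ≤ I') : tOp I ≤ tOp I' := by
  intro x hx
  have hx' : x ∈ tOp I := hx
  obtain ⟨J, hfg, hle, hv⟩ := mem_tOp.mp hx'
  show x ∈ tOp I'
  exact mem_tOp.mpr ⟨J, hfg, hle.trans h, hv⟩

lemma tOp_one : tOp (1 : FractionalIdeal D⁰ K) = 1 :=
  le_antisymm ((tOp_le_vOp 1).trans vOp_one.le) (le_tOp 1)

lemma tOp_vOp (I : FractionalIdeal D⁰ K) : tOp (vOp I) = vOp I :=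
  le_antisymm ((tOp_le_vOp _).trans (vOp_vOp I).le) (le_tOp _)

lemma tOp_spanSingleton (x : K) :
    tOp (FractionalIdeal.spanSingleton D⁰ x) = FractionalIdeal.spanSingleton D⁰ x :=
  le_antisymm ((tOp_le_vOp _).trans (vOp_spanSingleton x).le) (le_tOp _)

lemma fg_le_tOp {F I : FractionalIdeal D⁰ K} (hF : (F : Submodule D K).FG) (h : F ≤ tOp I) :
    ∃ J : FractionalIdeal D⁰ K, (J : Submodule D K).FG ∧ J ≤ I ∧ F ≤ vOp J := by
  have hdir : Directed (· ≤ ·)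
      (fun J : {J : FractionalIdeal D⁰ K // (J : Submodule D K).FG ∧ J ≤ I} =>
        ((vOp (J : FractionalIdeal D⁰ K) : FractionalIdeal D⁰ K) : Submodule D K)) := by
    rintro ⟨J₁, h₁, l₁⟩ ⟨J₂, h₂, l₂⟩
    refine ⟨⟨J₁ ⊔ J₂, ?_, sup_le l₁ l₂⟩, ?_, ?_⟩
    · rw [FractionalIdeal.coe_sup]; exact h₁.sup h₂
    · exact FractionalIdeal.coe_le_coe.2 (vOp_mono le_sup_left)
    · exact FractionalIdeal.coe_le_coe.2 (vOp_mono le_sup_right)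
  have hc := (Submodule.fg_iff_compact (F : Submodule D K)).mp hF
  rw [CompleteLattice.isCompactElement_iff_le_of_directed_sSup_le] at hc
  have hne : Nonempty {J : FractionalIdeal D⁰ K // (J : Submodule D K).FG ∧ J ≤ I} :=
    ⟨⟨0, by rw [FractionalIdeal.coe_zero]; exact Submodule.fg_bot, FractionalIdeal.zero_le I⟩⟩
  obtain ⟨x, ⟨J, rfl⟩, hlex⟩ := hc _ (Set.range_nonempty _)
    (hdir.directedOn_range) (by
      rw [sSup_range]
      exact FractionalIdeal.coe_le_coe.2 h)
  exact ⟨J.1, J.2.1, J.2.2, FractionalIdeal.coe_le_coe.1 hlex⟩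

lemma tOp_idem (I : FractionalIdeal D⁰ K) : tOp (tOp I) = tOp I := by
  refine le_antisymm ?_ (le_tOp _)
  intro x hx
  have hx' : x ∈ tOp (tOp I) := hx
  obtain ⟨J, hfg, hle, hv⟩ := mem_tOp.mp hx'
  obtain ⟨J', hfg', hle', hv'⟩ := fg_le_tOp hfg hle
  show x ∈ tOp I
  refine mem_tOp.mpr ⟨J', hfg', hle', ?_⟩
  have : vOp J ≤ vOp (vOp J') := vOp_mono hv'
  rw [vOp_vOp] at this
  exact this hv

lemma mul_tOp_le (X Y : FractionalIdeal D⁰ K) : X * tOp Y ≤ tOp (X * Y) := by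
  rw [FractionalIdeal.mul_le]
  intro x hx z hz
  rcases eq_or_ne x 0 with rfl | hx0
  · rw [zero_mul]
    exact mem_tOp.mpr ⟨0, by rw [FractionalIdeal.coe_zero]; exact Submodule.fg_bot,
      FractionalIdeal.zero_le _, by rw [vOp_zero]; exact (FractionalIdeal.mem_zero_iff D⁰).mpr rfl⟩
  obtain ⟨J, hfg, hle, hv⟩ := mem_tOp.mp hz
  refine mem_tOp.mpr ⟨FractionalIdeal.spanSingleton D⁰ x * J, ?_, ?_, ?_⟩
  · rw [FractionalIdeal.coe_mul, FractionalIdeal.coe_spanSingleton]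
    exact Submodule.FG.mul (Submodule.fg_span_singleton x) hfg
  · calc FractionalIdeal.spanSingleton D⁰ x * J ≤ FractionalIdeal.spanSingleton D⁰ x * Y :=
        mul_le_mul_right hle _
      _ ≤ X * Y := by
        rw [mul_comm _ Y, mul_comm X Y]
        exact mul_le_mul_right (FractionalIdeal.spanSingleton_le_iff_mem.mpr hx) Y
  · rw [vOp_span_mul hx0]
    exact FractionalIdeal.mul_mem_mul (FractionalIdeal.mem_spanSingleton_self D⁰ x) hv

lemma tOp_mul_tOp (X Y : FractionalIdeal D⁰ K) : tOp (X * tOp Y) = tOp (X * Y) := by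
  refine le_antisymm ?_ (tOp_mono (mul_le_mul_right (le_tOp Y) X))
  have := tOp_mono (mul_tOp_le X Y)
  rwa [tOp_idem] at this

lemma tOp_span_mul {x : K} (hx : x ≠ 0) (Y : FractionalIdeal D⁰ K) :
    tOp (FractionalIdeal.spanSingleton D⁰ x * Y) =
      FractionalIdeal.spanSingleton D⁰ x * tOp Y := by
  have hxinv : FractionalIdeal.spanSingleton D⁰ x⁻¹ * FractionalIdeal.spanSingleton D⁰ x
      = 1 := by
    rw [FractionalIdeal.spanSingleton_mul_spanSingleton, inv_mul_cancel₀ hx,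
      FractionalIdeal.spanSingleton_one]
  refine le_antisymm ?_ (mul_tOp_le _ Y)
  have h2 : FractionalIdeal.spanSingleton D⁰ x⁻¹ *
      tOp (FractionalIdeal.spanSingleton D⁰ x * Y) ≤ tOp Y := by
    have := mul_tOp_le (FractionalIdeal.spanSingleton D⁰ x⁻¹)
      (FractionalIdeal.spanSingleton D⁰ x * Y)
    rwa [← mul_assoc, hxinv, one_mul] at this
  have h3 : FractionalIdeal.spanSingleton D⁰ x * (FractionalIdeal.spanSingleton D⁰ x⁻¹ *
      tOp (FractionalIdeal.spanSingleton D⁰ x * Y)) ≤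
      FractionalIdeal.spanSingleton D⁰ x * tOp Y :=
    mul_le_mul_right h2 (FractionalIdeal.spanSingleton D⁰ x)
  rwa [show FractionalIdeal.spanSingleton D⁰ x * (FractionalIdeal.spanSingleton D⁰ x⁻¹ *
      tOp (FractionalIdeal.spanSingleton D⁰ x * Y))
      = (FractionalIdeal.spanSingleton D⁰ x⁻¹ * FractionalIdeal.spanSingleton D⁰ x) *
      tOp (FractionalIdeal.spanSingleton D⁰ x * Y) by ring, hxinv, one_mul] at h3

lemma ideal_exists_ne_zero {I : Ideal D} (hI : I ≠ 0) : ∃ a ∈ I, a ≠ (0:D) := by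
  by_contra h; push_neg at h
  exact hI (le_antisymm (fun z hz => h z hz) bot_le)

lemma coeIdeal_ne_zero_of_ne {I : Ideal D} (hI : I ≠ 0) : (I : FractionalIdeal D⁰ K) ≠ 0 :=
  FractionalIdeal.coeIdeal_ne_zero.mpr hI

lemma ideal_ne_zero_of_coe {I : Ideal D} (hI : (I : FractionalIdeal D⁰ K) ≠ 0) : I ≠ 0 :=
  fun h => hI (by rw [h]; simp)

lemma le_span_mul_inv {H J : FractionalIdeal D⁰ K} {a : K} (ha : a ≠ 0) (hH : H ≠ 0)
    (h : H * J ≤ FractionalIdeal.spanSingleton D⁰ a) :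
    J ≤ FractionalIdeal.spanSingleton D⁰ a * H⁻¹ := by
  have ha' : a⁻¹ ≠ 0 := inv_ne_zero ha
  have hsa' : FractionalIdeal.spanSingleton D⁰ a⁻¹ ≠ 0 :=
    FractionalIdeal.spanSingleton_ne_zero_iff.2 ha'
  have hrw : FractionalIdeal.spanSingleton D⁰ a * H⁻¹
      = (FractionalIdeal.spanSingleton D⁰ a⁻¹ * H)⁻¹ := by
    rw [inv_span_mul ha' H, inv_inv]
  rw [hrw, le_inv_iff_mul_le' (frac_mul_ne_zero hsa' hH)]
  have h2 : FractionalIdeal.spanSingleton D⁰ a⁻¹ * (H * J) ≤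
      FractionalIdeal.spanSingleton D⁰ a⁻¹ * FractionalIdeal.spanSingleton D⁰ a :=
    mul_le_mul_right h _
  calc J * (FractionalIdeal.spanSingleton D⁰ a⁻¹ * H)
      = FractionalIdeal.spanSingleton D⁰ a⁻¹ * (H * J) := by ring
    _ ≤ FractionalIdeal.spanSingleton D⁰ a⁻¹ * FractionalIdeal.spanSingleton D⁰ a := h2
    _ = 1 := by
        rw [FractionalIdeal.spanSingleton_mul_spanSingleton, inv_mul_cancel₀ ha,
          FractionalIdeal.spanSingleton_one]

lemma mul_right_mono' {X Y Z : FractionalIdeal D⁰ K} (h : X ≤ Y) : X * Z ≤ Y * Z := by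
  rw [mul_comm X Z, mul_comm Y Z]; exact mul_le_mul_right h Z

end Aux2

/-- A domain `D` is `t`-sharp if and only if (a) `D` is pre-Krull
(`I_v` is `t`-invertible for each nonzero ideal `I`), and (b) for all nonzero ideals
`I, A, B` with `I_v = D` and `I ⊇ AB`, there exist nonzero ideals `H, J` such that
`I_t = (HJ)_t`, `H_t ⊇ A` and `J_t ⊇ B`. -/
theorem statement15 (D : Type*) [CommRing D] [IsDomain D]
    (K : Type*) [Field K] [Algebra D K] [IsFractionRing D K] :
    IsSharpOp (D := D) (K := K) tOp ↔
      ((∀ I : Ideal D, I ≠ 0 →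
          tOp (vOp (I : FractionalIdeal D⁰ K) * (vOp (I : FractionalIdeal D⁰ K))⁻¹) = 1) ∧
        (∀ I A B : Ideal D, I ≠ 0 → A ≠ 0 → B ≠ 0 →
          vOp (I : FractionalIdeal D⁰ K) = 1 → A * B ≤ I →
          ∃ H J : Ideal D, H ≠ 0 ∧ J ≠ 0 ∧
            tOp (I : FractionalIdeal D⁰ K) =
              tOp ((H : FractionalIdeal D⁰ K) * (J : FractionalIdeal D⁰ K)) ∧
            (A : FractionalIdeal D⁰ K) ≤ tOp (H : FractionalIdeal D⁰ K) ∧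
            (B : FractionalIdeal D⁰ K) ≤ tOp (J : FractionalIdeal D⁰ K))) := by
  constructor
  · intro hsharp
    constructor
    · -- (a): pre-Krull
      intro I hI
      set IF := (I : FractionalIdeal D⁰ K) with hIFdef
      have hIF : IF ≠ 0 := coeIdeal_ne_zero_of_ne hI
      obtain ⟨a, haI, ha0⟩ := ideal_exists_ne_zero hI
      set a' := algebraMap D K a with ha'def
      have ha' : a' ≠ 0 := by
        simpa [ha'def] using
          (map_ne_zero_iff _ (FaithfulSMul.algebraMap_injective D K)).mpr ha0
      set sa := FractionalIdeal.spanSingleton D⁰ a' with hsadef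
      have hsa0 : sa ≠ 0 := FractionalIdeal.spanSingleton_ne_zero_iff.2 ha'
      have hainIF : a' ∈ IF := by
        rw [hIFdef, FractionalIdeal.mem_coeIdeal]
        exact ⟨a, haI, rfl⟩
      have hsaIF : sa ≤ IF := FractionalIdeal.spanSingleton_le_iff_mem.mpr hainIF
      have hBfrac : sa * IF⁻¹ ≤ 1 :=
        (mul_right_mono' hsaIF).trans (mul_inv_le_one' hIF)
      obtain ⟨B, hBcoe⟩ := FractionalIdeal.le_one_iff_exists_coeIdeal.mp hBfrac
      have hB0 : B ≠ 0 := ideal_ne_zero_of_coe (K := K)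
        (by rw [hBcoe]; exact frac_mul_ne_zero hsa0 (inv_ne_zero' hIF))
      have hIa0 : Ideal.span {a} ≠ 0 := by
        rw [Ne, Submodule.zero_eq_bot, Ideal.span_singleton_eq_bot]; exact ha0
      have hprod : I * B ≤ Ideal.span {a} := by
        rw [← FractionalIdeal.coeIdeal_le_coeIdeal K, FractionalIdeal.coeIdeal_mul,
          FractionalIdeal.coeIdeal_span_singleton, hBcoe]
        calc (IF * (sa * IF⁻¹) : FractionalIdeal D⁰ K) = sa * (IF * IF⁻¹) := by ring
          _ ≤ sa * 1 := mul_le_mul_right (mul_inv_le_one' hIF) sa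
          _ = FractionalIdeal.spanSingleton D⁰ (algebraMap D K a) := by
              rw [mul_one, hsadef, ha'def]
      obtain ⟨H, J, hH0, hJ0, heq, hAle, hBle⟩ :=
        hsharp (Ideal.span {a}) I B hIa0 hI hB0 hprod
      set HF := (H : FractionalIdeal D⁰ K)
      set JF := (J : FractionalIdeal D⁰ K)
      have hHF : HF ≠ 0 := coeIdeal_ne_zero_of_ne hH0
      have hJF : JF ≠ 0 := coeIdeal_ne_zero_of_ne hJ0
      have hsat : tOp ((Ideal.span {a} : Ideal D) : FractionalIdeal D⁰ K) = sa := by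
        rw [FractionalIdeal.coeIdeal_span_singleton, ← ha'def, ← hsadef, tOp_spanSingleton]
      have hHJt : tOp (HF * JF) = sa := by rw [← heq, hsat]
      have hHJ_le : HF * JF ≤ sa := hHJt ▸ le_tOp (HF * JF)
      have hHinv : HF⁻¹ ≤ IF⁻¹ := by
        have h1 : IF ≤ vOp HF := le_trans hAle (tOp_le_vOp HF)
        have h2 := FractionalIdeal.inv_anti_mono hIF (vOp_ne_zero hHF) h1
        rwa [inv_vOp] at h2
      have hJle : JF ≤ sa * IF⁻¹ :=
        (le_span_mul_inv ha' hHF hHJ_le).trans (mul_le_mul_right hHinv sa)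
      have hJinv : JF⁻¹ ≤ FractionalIdeal.spanSingleton D⁰ a'⁻¹ * vOp IF := by
        have h1 : sa * IF⁻¹ ≤ vOp JF := by
          rw [← hBcoe]
          exact le_trans hBle (tOp_le_vOp JF)
        have h2 := FractionalIdeal.inv_anti_mono
          (frac_mul_ne_zero hsa0 (inv_ne_zero' hIF)) (vOp_ne_zero hJF) h1
        rw [inv_vOp] at h2
        rwa [hsadef, inv_span_mul ha' IF⁻¹] at h2
      have hHle : HF ≤ vOp IF := by
        have h1 : HF ≤ sa * JF⁻¹ :=
          le_span_mul_inv ha' hJF (by rwa [mul_comm] at hHJ_le)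
        refine h1.trans ?_
        calc sa * JF⁻¹ ≤ sa * (FractionalIdeal.spanSingleton D⁰ a'⁻¹ * vOp IF) :=
              mul_le_mul_right hJinv sa
          _ = (sa * FractionalIdeal.spanSingleton D⁰ a'⁻¹) * vOp IF := by ring
          _ = vOp IF := by
              rw [hsadef, FractionalIdeal.spanSingleton_mul_spanSingleton,
                mul_inv_cancel₀ ha', FractionalIdeal.spanSingleton_one, one_mul]
      have htot : HF * JF ≤ sa * (vOp IF * IF⁻¹) := by
        calc HF * JF ≤ vOp IF * JF := mul_right_mono' hHle
          _ ≤ vOp IF * (sa * IF⁻¹) := mul_le_mul_right hJle _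
          _ = sa * (vOp IF * IF⁻¹) := by ring
      have hge : (1 : FractionalIdeal D⁰ K) ≤ tOp (vOp IF * IF⁻¹) := by
        have h1 : sa ≤ sa * tOp (vOp IF * IF⁻¹) := by
          calc sa = tOp (HF * JF) := hHJt.symm
            _ ≤ tOp (sa * (vOp IF * IF⁻¹)) := tOp_mono htot
            _ = sa * tOp (vOp IF * IF⁻¹) := by rw [hsadef, tOp_span_mul ha']
        have h2 : FractionalIdeal.spanSingleton D⁰ a'⁻¹ * sa ≤
            FractionalIdeal.spanSingleton D⁰ a'⁻¹ * (sa * tOp (vOp IF * IF⁻¹)) :=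
          mul_le_mul_right h1 (FractionalIdeal.spanSingleton D⁰ a'⁻¹)
        rwa [hsadef, ← mul_assoc, FractionalIdeal.spanSingleton_mul_spanSingleton,
          inv_mul_cancel₀ ha', FractionalIdeal.spanSingleton_one, one_mul] at h2
      have hle : tOp (vOp IF * IF⁻¹) ≤ 1 := by
        have h1 : vOp IF * IF⁻¹ ≤ 1 := by
          rw [← inv_vOp IF]
          exact mul_inv_le_one' (vOp_ne_zero hIF)
        exact (tOp_mono h1).trans tOp_one.le
      rw [inv_vOp]
      exact le_antisymm hle hge
    · -- (b) is a special case
      intro I A B hI hA hB _ hAB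
      exact hsharp I A B hI hA hB hAB
  · rintro ⟨ha, hb⟩ I A B hI hA hB hAB
    set cI := (I : FractionalIdeal D⁰ K) with hcIdef
    set cA := (A : FractionalIdeal D⁰ K)
    set cB := (B : FractionalIdeal D⁰ K)
    -- M := I + A
    set M : Ideal D := I ⊔ A with hMdef
    have hM0 : M ≠ 0 := fun h => hI (le_antisymm (h ▸ le_sup_left) bot_le)
    set cM := (M : FractionalIdeal D⁰ K) with hcMdef
    have hcM0 : cM ≠ 0 := coeIdeal_ne_zero_of_ne hM0
    have hcMinv0 : cM⁻¹ ≠ 0 := inv_ne_zero' hcM0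
    have haM := ha M hM0
    rw [inv_vOp] at haM
    -- haM : tOp (vOp cM * cM⁻¹) = 1
    have hBM : B * M ≤ I := by
      rw [hMdef, Ideal.mul_sup]
      exact sup_le Ideal.mul_le_right (by rw [mul_comm]; exact hAB)
    -- J₁
    have hIM : cI ≤ cM := (FractionalIdeal.coeIdeal_le_coeIdeal K).mpr le_sup_left
    have hJ1le : cI * cM⁻¹ ≤ 1 := (mul_right_mono' hIM).trans (mul_inv_le_one' hcM0)
    obtain ⟨J₁, hJ₁coe⟩ := FractionalIdeal.le_one_iff_exists_coeIdeal.mp hJ1le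
    have hJ₁0 : J₁ ≠ 0 := ideal_ne_zero_of_coe (K := K)
      (by rw [hJ₁coe]; exact frac_mul_ne_zero (coeIdeal_ne_zero_of_ne hI) hcMinv0)
    -- U
    obtain ⟨U, hUcoe⟩ := FractionalIdeal.le_one_iff_exists_coeIdeal.mp
      (mul_inv_le_one' hcM0)
    have hU0 : U ≠ 0 := ideal_ne_zero_of_coe (K := K)
      (by rw [hUcoe]; exact frac_mul_ne_zero hcM0 hcMinv0)
    have key1 : tOp cI = tOp (vOp cM * (J₁ : FractionalIdeal D⁰ K)) := by
      rw [hJ₁coe]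
      calc tOp cI = tOp (cI * 1) := by rw [mul_one]
        _ = tOp (cI * tOp (vOp cM * cM⁻¹)) := by rw [haM]
        _ = tOp (cI * (vOp cM * cM⁻¹)) := tOp_mul_tOp _ _
        _ = tOp (vOp cM * (cI * cM⁻¹)) := by ring_nf
    have hMtU : tOp (vOp cM * (U : FractionalIdeal D⁰ K)) = tOp cM := by
      rw [hUcoe]
      calc tOp (vOp cM * (cM * cM⁻¹)) = tOp (cM * (vOp cM * cM⁻¹)) := by ring_nf
        _ = tOp (cM * tOp (vOp cM * cM⁻¹)) := (tOp_mul_tOp _ _).symm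
        _ = tOp (cM * 1) := by rw [haM]
        _ = tOp cM := by rw [mul_one]
    have hBU : cB * (U : FractionalIdeal D⁰ K) ≤ ((J₁ : FractionalIdeal D⁰ K) : FractionalIdeal D⁰ K) := by
      rw [hUcoe, hJ₁coe]
      have h1 : cB * cM ≤ cI := by
        rw [← FractionalIdeal.coeIdeal_mul]
        exact (FractionalIdeal.coeIdeal_le_coeIdeal K).mpr hBM
      calc cB * (cM * cM⁻¹) = (cB * cM) * cM⁻¹ := by ring
        _ ≤ cI * cM⁻¹ := mul_right_mono' h1
    -- M₂ := J₁ + B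
    set M₂ : Ideal D := J₁ ⊔ B with hM₂def
    have hM₂0 : M₂ ≠ 0 := fun h => hJ₁0 (le_antisymm (h ▸ le_sup_left) bot_le)
    set cM₂ := (M₂ : FractionalIdeal D⁰ K) with hcM₂def
    have hcM₂0 : cM₂ ≠ 0 := coeIdeal_ne_zero_of_ne hM₂0
    have hcM₂inv0 : cM₂⁻¹ ≠ 0 := inv_ne_zero' hcM₂0
    have haM₂ := ha M₂ hM₂0
    rw [inv_vOp] at haM₂
    have hJ₁M₂ : ((J₁ : FractionalIdeal D⁰ K) : FractionalIdeal D⁰ K) ≤ cM₂ :=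
      (FractionalIdeal.coeIdeal_le_coeIdeal K).mpr le_sup_left
    have hJ2le : ((J₁ : FractionalIdeal D⁰ K) : FractionalIdeal D⁰ K) * cM₂⁻¹ ≤ 1 :=
      (mul_right_mono' hJ₁M₂).trans (mul_inv_le_one' hcM₂0)
    obtain ⟨J₂, hJ₂coe⟩ := FractionalIdeal.le_one_iff_exists_coeIdeal.mp hJ2le
    have hJ₂0 : J₂ ≠ 0 := ideal_ne_zero_of_coe (K := K)
      (by rw [hJ₂coe]; exact frac_mul_ne_zero (coeIdeal_ne_zero_of_ne hJ₁0) hcM₂inv0)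
    obtain ⟨U₂, hU₂coe⟩ := FractionalIdeal.le_one_iff_exists_coeIdeal.mp
      (mul_inv_le_one' hcM₂0)
    have hU₂0 : U₂ ≠ 0 := ideal_ne_zero_of_coe (K := K)
      (by rw [hU₂coe]; exact frac_mul_ne_zero hcM₂0 hcM₂inv0)
    have key2 : tOp ((J₁ : FractionalIdeal D⁰ K) : FractionalIdeal D⁰ K) = tOp (vOp cM₂ * (J₂ : FractionalIdeal D⁰ K)) := by
      rw [hJ₂coe]
      calc tOp ((J₁ : FractionalIdeal D⁰ K) : FractionalIdeal D⁰ K) = tOp (((J₁ : FractionalIdeal D⁰ K) : FractionalIdeal D⁰ K) * 1) := by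
            rw [mul_one]
        _ = tOp (((J₁ : FractionalIdeal D⁰ K) : FractionalIdeal D⁰ K) * tOp (vOp cM₂ * cM₂⁻¹)) := by rw [haM₂]
        _ = tOp (((J₁ : FractionalIdeal D⁰ K) : FractionalIdeal D⁰ K) * (vOp cM₂ * cM₂⁻¹)) := tOp_mul_tOp _ _
        _ = tOp (vOp cM₂ * (((J₁ : FractionalIdeal D⁰ K) : FractionalIdeal D⁰ K) * cM₂⁻¹)) := by ring_nf
    have hM₂tU₂ : tOp (vOp cM₂ * (U₂ : FractionalIdeal D⁰ K)) = tOp cM₂ := by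
      rw [hU₂coe]
      calc tOp (vOp cM₂ * (cM₂ * cM₂⁻¹)) = tOp (cM₂ * (vOp cM₂ * cM₂⁻¹)) := by ring_nf
        _ = tOp (cM₂ * tOp (vOp cM₂ * cM₂⁻¹)) := (tOp_mul_tOp _ _).symm
        _ = tOp (cM₂ * 1) := by rw [haM₂]
        _ = tOp cM₂ := by rw [mul_one]
    -- U * M₂ ≤ J₁ at the ideal level
    have hBUidl : B * U ≤ J₁ := by
      rw [← FractionalIdeal.coeIdeal_le_coeIdeal K, FractionalIdeal.coeIdeal_mul]
      exact hBU
    have hUM₂ : U * M₂ ≤ J₁ := by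
      rw [hM₂def, Ideal.mul_sup]
      exact sup_le Ideal.mul_le_right (by rw [mul_comm]; exact hBUidl)
    have hUU₂ : ((U : FractionalIdeal D⁰ K) : FractionalIdeal D⁰ K) * (U₂ : FractionalIdeal D⁰ K) ≤ ((J₂ : FractionalIdeal D⁰ K) : FractionalIdeal D⁰ K) := by
      rw [hU₂coe, hJ₂coe]
      have h1 : ((U : FractionalIdeal D⁰ K) : FractionalIdeal D⁰ K) * cM₂ ≤ (J₁ : FractionalIdeal D⁰ K) := by
        rw [← FractionalIdeal.coeIdeal_mul]
        exact (FractionalIdeal.coeIdeal_le_coeIdeal K).mpr hUM₂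
      calc ((U : FractionalIdeal D⁰ K) : FractionalIdeal D⁰ K) * (cM₂ * cM₂⁻¹) = (((U : FractionalIdeal D⁰ K) : FractionalIdeal D⁰ K) * cM₂) * cM₂⁻¹ := by ring
        _ ≤ ((J₁ : FractionalIdeal D⁰ K) : FractionalIdeal D⁰ K) * cM₂⁻¹ := mul_right_mono' h1
    -- vOp of U, U₂ are trivial
    have hvU : vOp ((U : FractionalIdeal D⁰ K) : FractionalIdeal D⁰ K) = 1 := by
      rw [hUcoe]
      have h1 : vOp (cM * cM⁻¹) = vOp (vOp cM * cM⁻¹) := by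
        rw [mul_comm cM cM⁻¹, mul_comm (vOp cM) cM⁻¹, vOp_mul_vOp]
      rw [h1]
      refine le_antisymm ?_ ?_
      · have h2 : vOp cM * cM⁻¹ ≤ 1 := by
          rw [← inv_vOp cM]; exact mul_inv_le_one' (vOp_ne_zero hcM0)
        exact (vOp_mono h2).trans vOp_one.le
      · rw [← haM]; exact tOp_le_vOp _
    have hvU₂ : vOp ((U₂ : FractionalIdeal D⁰ K) : FractionalIdeal D⁰ K) = 1 := by
      rw [hU₂coe]
      have h1 : vOp (cM₂ * cM₂⁻¹) = vOp (vOp cM₂ * cM₂⁻¹) := by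
        rw [mul_comm cM₂ cM₂⁻¹, mul_comm (vOp cM₂) cM₂⁻¹, vOp_mul_vOp]
      rw [h1]
      refine le_antisymm ?_ ?_
      · have h2 : vOp cM₂ * cM₂⁻¹ ≤ 1 := by
          rw [← inv_vOp cM₂]; exact mul_inv_le_one' (vOp_ne_zero hcM₂0)
        exact (vOp_mono h2).trans vOp_one.le
      · rw [← haM₂]; exact tOp_le_vOp _
    have hJ₂v : vOp ((J₂ : FractionalIdeal D⁰ K) : FractionalIdeal D⁰ K) = 1 := by
      refine le_antisymm ?_ ?_
      · have : ((J₂ : FractionalIdeal D⁰ K) : FractionalIdeal D⁰ K) ≤ 1 := FractionalIdeal.coeIdeal_le_one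
        exact (vOp_mono this).trans vOp_one.le
      · have h1 : (1 : FractionalIdeal D⁰ K) = vOp (((U : FractionalIdeal D⁰ K) : FractionalIdeal D⁰ K) * (U₂ : FractionalIdeal D⁰ K)) := by
          rw [mul_comm, ← vOp_mul_vOp, hvU, mul_one, hvU₂]
        rw [h1]
        exact vOp_mono hUU₂
    have hUU₂idl : U * U₂ ≤ J₂ := by
      rw [← FractionalIdeal.coeIdeal_le_coeIdeal K, FractionalIdeal.coeIdeal_mul]
      exact hUU₂
    obtain ⟨X, Y, hX0, hY0, hXY, hUX, hU₂Y⟩ := hb J₂ U U₂ hJ₂0 hU0 hU₂0 hJ₂v hUU₂idl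
    -- vOp cM and vOp cM₂ as ideals
    have hvM1 : vOp cM ≤ 1 := by
      have := vOp_mono (FractionalIdeal.coeIdeal_le_one : (M : FractionalIdeal D⁰ K) ≤ 1)
      rwa [vOp_one] at this
    obtain ⟨H₁, hH₁coe⟩ := FractionalIdeal.le_one_iff_exists_coeIdeal.mp hvM1
    have hH₁0 : H₁ ≠ 0 := ideal_ne_zero_of_coe (K := K)
      (by rw [hH₁coe]; exact vOp_ne_zero hcM0)
    have hvM₂1 : vOp cM₂ ≤ 1 := by
      have := vOp_mono (FractionalIdeal.coeIdeal_le_one : (M₂ : FractionalIdeal D⁰ K) ≤ 1)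
      rwa [vOp_one] at this
    obtain ⟨H₂, hH₂coe⟩ := FractionalIdeal.le_one_iff_exists_coeIdeal.mp hvM₂1
    have hH₂0 : H₂ ≠ 0 := ideal_ne_zero_of_coe (K := K)
      (by rw [hH₂coe]; exact vOp_ne_zero hcM₂0)
    refine ⟨H₁ * X, H₂ * Y, ?_, ?_, ?_, ?_, ?_⟩
    · intro h
      have := coeIdeal_ne_zero_of_ne (K := K) (I := H₁) hH₁0
      have h2 := frac_mul_ne_zero this (coeIdeal_ne_zero_of_ne (K := K) hX0)
      rw [← FractionalIdeal.coeIdeal_mul] at h2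
      exact h2 (by rw [h]; simp)
    · intro h
      have := coeIdeal_ne_zero_of_ne (K := K) (I := H₂) hH₂0
      have h2 := frac_mul_ne_zero this (coeIdeal_ne_zero_of_ne (K := K) hY0)
      rw [← FractionalIdeal.coeIdeal_mul] at h2
      exact h2 (by rw [h]; simp)
    · -- main equality
      rw [FractionalIdeal.coeIdeal_mul, FractionalIdeal.coeIdeal_mul, hH₁coe, hH₂coe]
      calc tOp cI = tOp (vOp cM * (J₁ : FractionalIdeal D⁰ K)) := key1
        _ = tOp (vOp cM * tOp (J₁ : FractionalIdeal D⁰ K)) := (tOp_mul_tOp _ _).symm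
        _ = tOp (vOp cM * tOp (vOp cM₂ * (J₂ : FractionalIdeal D⁰ K))) := by rw [key2]
        _ = tOp (vOp cM * (vOp cM₂ * (J₂ : FractionalIdeal D⁰ K))) := tOp_mul_tOp _ _
        _ = tOp ((vOp cM * vOp cM₂) * (J₂ : FractionalIdeal D⁰ K)) := by rw [mul_assoc]
        _ = tOp ((vOp cM * vOp cM₂) * tOp (J₂ : FractionalIdeal D⁰ K)) := (tOp_mul_tOp _ _).symm
        _ = tOp ((vOp cM * vOp cM₂) * tOp ((X : FractionalIdeal D⁰ K) * (Y : FractionalIdeal D⁰ K))) := by rw [hXY]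
        _ = tOp ((vOp cM * vOp cM₂) * ((X : FractionalIdeal D⁰ K) * (Y : FractionalIdeal D⁰ K))) := tOp_mul_tOp _ _
        _ = tOp (vOp cM * (X : FractionalIdeal D⁰ K) * (vOp cM₂ * (Y : FractionalIdeal D⁰ K))) := by ring_nf
    · -- A-side
      rw [FractionalIdeal.coeIdeal_mul, hH₁coe]
      have h1 : tOp (vOp cM * (U : FractionalIdeal D⁰ K)) ≤ tOp (vOp cM * (X : FractionalIdeal D⁰ K)) := by
        calc tOp (vOp cM * (U : FractionalIdeal D⁰ K)) ≤ tOp (vOp cM * tOp (X : FractionalIdeal D⁰ K)) :=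
              tOp_mono (mul_le_mul_right hUX _)
          _ = tOp (vOp cM * (X : FractionalIdeal D⁰ K)) := tOp_mul_tOp _ _
      rw [hMtU] at h1
      refine le_trans ?_ h1
      exact le_trans ((FractionalIdeal.coeIdeal_le_coeIdeal K).mpr le_sup_right) (le_tOp cM)
    · -- B-side
      rw [FractionalIdeal.coeIdeal_mul, hH₂coe]
      have h1 : tOp (vOp cM₂ * (U₂ : FractionalIdeal D⁰ K)) ≤ tOp (vOp cM₂ * (Y : FractionalIdeal D⁰ K)) := by
        calc tOp (vOp cM₂ * (U₂ : FractionalIdeal D⁰ K)) ≤ tOp (vOp cM₂ * tOp (Y : FractionalIdeal D⁰ K)) :=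
              tOp_mono (mul_le_mul_right hU₂Y _)
          _ = tOp (vOp cM₂ * (Y : FractionalIdeal D⁰ K)) := tOp_mul_tOp _ _
      rw [hM₂tU₂] at h1
      refine le_trans ?_ h1
      exact le_trans ((FractionalIdeal.coeIdeal_le_coeIdeal K).mpr le_sup_right) (le_tOp cM₂)
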